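/- arXiv:1804.00936 — 6 statements merged into one kernel-verified Lean document; each statement's English description precedes it below -/
import Mathlib

section
/- For each κ > 0 and all t ≥ 0, one has (1/2) f_κ(t) ≤ t · f_κ'(t) ≤ f_κ(t), where f_κ'(t) = (1 + 2κ f_κ(t)²)^{-1/2}. -/
open Real Filter Set

/-- `Fk κ t = ∫₀ᵗ √(1 + 2κ s²) ds`. -/
noncomputable def Fk (κ t : ℝ) : ℝ := ∫ s in (0:ℝ)..t, Real.sqrt (1 + 2*κ*s^2)

/-- `f` is the inverse of `Fk κ` on `[0,∞)`. -/
def IsInvF (κ : ℝ) (f : ℝ → ℝ) : Prop :=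
  (∀ s, 0 ≤ s → f (Fk κ s) = s) ∧ ∀ t, 0 ≤ t → 0 ≤ f t ∧ Fk κ (f t) = t

/-- The derivative formula `f_κ'(t) = (1 + 2κ f_κ(t)²)^{-1/2}`. -/
noncomputable def fd (κ : ℝ) (f : ℝ → ℝ) (t : ℝ) : ℝ :=
  1 / Real.sqrt (1 + 2*κ*(f t)^2)

theorem stmt_5 (κ : ℝ) (hκ : 0 < κ) (f : ℝ → ℝ) (hf : IsInvF κ f) :
    ∀ t, 0 ≤ t → (1/2) * f t ≤ t * fd κ f t ∧ t * fd κ f t ≤ f t := by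
  intro t ht
  obtain ⟨hs0, hFs⟩ := hf.2 t ht
  have hpos : ∀ u : ℝ, 0 < 1 + 2*κ*u^2 := fun u => by positivity
  have hsq : ∀ u : ℝ, 0 < Real.sqrt (1 + 2*κ*u^2) := fun u => Real.sqrt_pos.mpr (hpos u)
  have hcont : Continuous fun u : ℝ => Real.sqrt (1 + 2*κ*u^2) := by fun_prop
  have hcont2 : Continuous fun u : ℝ => (1 + 4*κ*u^2) / (2 * Real.sqrt (1 + 2*κ*u^2)) := by
    apply Continuous.div (by fun_prop) (by fun_prop)
    intro u
    have := hsq u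
    positivity
  -- upper bound on Fk κ (f t)
  have hupper : Fk κ (f t) ≤ f t * Real.sqrt (1 + 2*κ*(f t)^2) := by
    have hmono : ∀ u ∈ Set.Icc (0:ℝ) (f t),
        Real.sqrt (1 + 2*κ*u^2) ≤ Real.sqrt (1 + 2*κ*(f t)^2) := by
      intro u hu
      apply Real.sqrt_le_sqrt
      have h2 : u^2 ≤ (f t)^2 := pow_le_pow_left₀ hu.1 hu.2 2
      nlinarith [hκ, h2]
    have := intervalIntegral.integral_mono_on (μ := MeasureTheory.volume) hs0
      (hcont.intervalIntegrable 0 (f t))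
      ((continuous_const (y := Real.sqrt (1 + 2*κ*(f t)^2))).intervalIntegrable 0 (f t)) hmono
    simpa [Fk, mul_comm] using this
  -- derivative of h u = (1/2) * (u * √(1+2κu²))
  have hderiv : ∀ u : ℝ, HasDerivAt (fun u : ℝ => (1/2) * (u * Real.sqrt (1 + 2*κ*u^2)))
      ((1 + 4*κ*u^2) / (2 * Real.sqrt (1 + 2*κ*u^2))) u := by
    intro u
    have hg : HasDerivAt (fun u : ℝ => 1 + 2*κ*u^2) (4*κ*u) u := by
      have : HasDerivAt (fun u : ℝ => 1 + 2*κ*u^2) (0 + 2*κ*(2*u^(2-1))) u :=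
        (hasDerivAt_const u 1).add (((hasDerivAt_pow 2 u)).const_mul (2*κ))
      simpa using this.congr_deriv (by ring)
    have hsqrt : HasDerivAt (fun u : ℝ => Real.sqrt (1 + 2*κ*u^2))
        (1 / (2 * Real.sqrt (1 + 2*κ*u^2)) * (4*κ*u)) u :=
      (Real.hasDerivAt_sqrt (ne_of_gt (hpos u))).comp u hg
    have hmul : HasDerivAt (fun u : ℝ => u * Real.sqrt (1 + 2*κ*u^2))
        (1 * Real.sqrt (1 + 2*κ*u^2) + u * (1 / (2 * Real.sqrt (1 + 2*κ*u^2)) * (4*κ*u))) u :=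
      (hasDerivAt_id u).mul hsqrt
    have := hmul.const_mul (1/2 : ℝ)
    apply this.congr_deriv
    have hG := Real.sq_sqrt (le_of_lt (hpos u))
    have hne := ne_of_gt (hsq u)
    field_simp
    linear_combination 2 * hG
  -- FTC
  have hFTC : ∫ u in (0:ℝ)..(f t), (1 + 4*κ*u^2) / (2 * Real.sqrt (1 + 2*κ*u^2))
      = (1/2) * (f t * Real.sqrt (1 + 2*κ*(f t)^2))
        - (1/2) * (0 * Real.sqrt (1 + 2*κ*(0:ℝ)^2)) :=
    intervalIntegral.integral_eq_sub_of_hasDerivAt (fun u _ => hderiv u)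
      (hcont2.intervalIntegrable 0 (f t))
  -- lower bound on Fk κ (f t)
  have hlower : (1/2) * (f t * Real.sqrt (1 + 2*κ*(f t)^2)) ≤ Fk κ (f t) := by
    have hptwise : ∀ u ∈ Set.Icc (0:ℝ) (f t),
        (1 + 4*κ*u^2) / (2 * Real.sqrt (1 + 2*κ*u^2)) ≤ Real.sqrt (1 + 2*κ*u^2) := by
      intro u _
      rw [div_le_iff₀ (by have := hsq u; positivity)]
      have hG := Real.sq_sqrt (le_of_lt (hpos u))
      nlinarith [hG, hκ, sq_nonneg u]
    have := intervalIntegral.integral_mono_on (μ := MeasureTheory.volume) hs0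
      (hcont2.intervalIntegrable 0 (f t)) (hcont.intervalIntegrable 0 (f t)) hptwise
    rw [hFTC] at this
    have h0 : (1/2) * ((0:ℝ) * Real.sqrt (1 + 2*κ*(0:ℝ)^2)) = 0 := by ring
    rw [h0, sub_zero] at this
    simpa [Fk] using this
  rw [hFs] at hupper hlower
  have hq := hsq (f t)
  constructor
  · unfold fd
    rw [mul_one_div, le_div_iff₀ hq]
    nlinarith [hlower]
  · unfold fd
    rw [mul_one_div, div_le_iff₀ hq]
    exact hupper
end

section
/- For each κ > 0, the map t ↦ f_κ(t)/t^{1/2} is nondecreasing on (0,∞). -/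
open Real Filter Set

section aux

variable {κ : ℝ} (hκ : 0 < κ)

lemma g_pos (hκ : 0 ≤ κ) (s : ℝ) : (0:ℝ) < 1 + 2*κ*s^2 := by positivity

lemma c_cont (hκ : 0 ≤ κ) : Continuous (fun s : ℝ => Real.sqrt (1 + 2*κ*s^2)) := by
  fun_prop

lemma hasDerivAt_Fk (hκ : 0 ≤ κ) (s : ℝ) :
    HasDerivAt (Fk κ) (Real.sqrt (1 + 2*κ*s^2)) s := by
  have hc := c_cont hκ
  exact intervalIntegral.integral_hasDerivAt_right
    (hc.intervalIntegrable 0 s)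
    hc.aestronglyMeasurable.stronglyMeasurableAtFilter
    hc.continuousAt

lemma sqrt_g_pos (hκ : 0 ≤ κ) (s : ℝ) : 0 < Real.sqrt (1 + 2*κ*s^2) :=
  Real.sqrt_pos.2 (g_pos hκ s)

lemma hasDerivAt_c (hκ : 0 ≤ κ) (s : ℝ) :
    HasDerivAt (fun s : ℝ => Real.sqrt (1 + 2*κ*s^2))
      (2*κ*s / Real.sqrt (1 + 2*κ*s^2)) s := by
  have hg : HasDerivAt (fun s : ℝ => 1 + 2*κ*s^2) (4*κ*s) s := by
    have := ((hasDerivAt_pow 2 s).const_mul (2*κ)).const_add 1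
    exact this.congr_deriv (by norm_num; ring)
  have := hg.sqrt (ne_of_gt (g_pos hκ s))
  convert this using 1
  have hne := (sqrt_g_pos hκ s).ne'
  field_simp
  ring

lemma Fk_strictMono (hκ : 0 ≤ κ) : StrictMono (Fk κ) := by
  apply strictMono_of_deriv_pos
  intro s
  rw [(hasDerivAt_Fk hκ s).deriv]
  exact sqrt_g_pos hκ s

lemma Fk_zero : Fk κ 0 = 0 := by simp [Fk]

lemma key_ineq (hκ : 0 ≤ κ) {s : ℝ} (hs : 0 ≤ s) :
    s * Real.sqrt (1 + 2*κ*s^2) ≤ 2 * Fk κ s := by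
  set H : ℝ → ℝ := fun s => 2 * Fk κ s - s * Real.sqrt (1 + 2*κ*s^2) with hH
  have hder : ∀ u : ℝ, HasDerivAt H (1 / Real.sqrt (1 + 2*κ*u^2)) u := by
    intro u
    have h1 := ((hasDerivAt_Fk hκ u).const_mul 2).sub
      ((hasDerivAt_id u).mul (hasDerivAt_c hκ u))
    refine h1.congr_deriv ?_
    have hg := g_pos hκ u
    have hs := sqrt_g_pos hκ u
    have hsq : Real.sqrt (1 + 2*κ*u^2) * Real.sqrt (1 + 2*κ*u^2) = 1 + 2*κ*u^2 :=
      Real.mul_self_sqrt (le_of_lt hg)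
    simp only [id_eq]
    field_simp
    nlinarith [hsq]
  have hmono : Monotone H := by
    apply monotone_of_deriv_nonneg
    · exact fun u => ((hder u).differentiableAt)
    · intro u
      rw [(hder u).deriv]
      positivity
  have h0 : H 0 = 0 := by simp [hH, Fk_zero]
  have := hmono hs
  rw [h0] at this
  simp only [hH] at this
  linarith

lemma Fk_antitone (hκ : 0 ≤ κ) :
    AntitoneOn (fun s => Fk κ s / s^2) (Set.Ioi (0:ℝ)) := by
  have hcont : ContinuousOn (Fk κ) (Set.Ioi (0:ℝ)) :=
    fun x _ => ((hasDerivAt_Fk hκ x).continuousAt).continuousWithinAt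
  have hderG : ∀ s : ℝ, s ∈ Set.Ioi (0:ℝ) → HasDerivAt (fun s => Fk κ s / s^2)
      ((Real.sqrt (1 + 2*κ*s^2) * s^2 - Fk κ s * (2*s)) / (s^2)^2) s := by
    intro s hs
    have hs0 : s ≠ 0 := ne_of_gt hs
    exact (hasDerivAt_Fk hκ s).div (by simpa using hasDerivAt_pow 2 s) (by positivity)
  apply antitoneOn_of_deriv_nonpos (convex_Ioi 0)
  · intro x hx
    exact (((hasDerivAt_Fk hκ x).div (by simpa using hasDerivAt_pow 2 x)
      (by simp at hx; positivity)).continuousAt).continuousWithinAt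
  · rw [interior_Ioi]
    intro x hx
    exact (hderG x hx).differentiableAt.differentiableWithinAt
  · rw [interior_Ioi]
    intro x hx
    rw [(hderG x hx).deriv]
    have hx0 : (0:ℝ) < x := hx
    have hk := key_ineq hκ (le_of_lt hx0)
    apply div_nonpos_of_nonpos_of_nonneg
    · nlinarith
    · positivity

end aux

theorem stmt_7 (κ : ℝ) (hκ : 0 < κ) (f : ℝ → ℝ) (hf : IsInvF κ f) :
    MonotoneOn (fun t => f t / Real.sqrt t) (Set.Ioi 0) := by
  have hκ' := hκ.le
  intro a ha b hb hab
  have ha0 : (0:ℝ) < a := ha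
  have hb0 : (0:ℝ) < b := hb
  obtain ⟨hx0, hxa⟩ := hf.2 a ha0.le
  obtain ⟨hy0, hyb⟩ := hf.2 b hb0.le
  set x := f a with hxdef
  set y := f b with hydef
  have hsm := Fk_strictMono hκ'
  have hxpos : 0 < x := by
    rcases lt_or_eq_of_le hx0 with h | h
    · exact h
    · exfalso; rw [← h, Fk_zero] at hxa; linarith
  have hypos : 0 < y := by
    rcases lt_or_eq_of_le hy0 with h | h
    · exact h
    · exfalso; rw [← h, Fk_zero] at hyb; linarith
  have hxy : x ≤ y := by
    by_contra h
    push_neg at h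
    have := hsm h
    rw [hxa, hyb] at this
    linarith
  have hant := Fk_antitone hκ' (Set.mem_Ioi.2 hxpos) (Set.mem_Ioi.2 hypos) hxy
  simp only at hant
  rw [hxa, hyb] at hant
  -- hant : b / y^2 ≤ a / x^2
  have hsa : 0 < Real.sqrt a := Real.sqrt_pos.2 ha0
  have hsb : 0 < Real.sqrt b := Real.sqrt_pos.2 hb0
  simp only
  rw [div_le_div_iff₀ hsa hsb]
  -- x * √b ≤ y * √a
  have hsq : (x * Real.sqrt b)^2 ≤ (y * Real.sqrt a)^2 := by
    have h1 : (x * Real.sqrt b)^2 = x^2 * b := by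
      rw [mul_pow, Real.sq_sqrt hb0.le]
    have h2 : (y * Real.sqrt a)^2 = y^2 * a := by
      rw [mul_pow, Real.sq_sqrt ha0.le]
    rw [h1, h2]
    have := (div_le_div_iff₀ (by positivity : (0:ℝ) < y^2) (by positivity : (0:ℝ) < x^2)).1 hant
    nlinarith
  have h1 : 0 ≤ x * Real.sqrt b := by positivity
  have h2 : 0 ≤ y * Real.sqrt a := by positivity
  exact (pow_le_pow_iff_left₀ h1 h2 two_ne_zero).1 hsq
end

section
/- For each κ > 0, the limit of f_κ(t) f_κ'(t)/t as t → 0⁺ equals 1, and the limit of f_κ(t) f_κ'(t)/t as t → ∞ equals 0, where f_κ'(t) = (1 + 2κ f_κ(t)²)^{-1/2}. -/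
open Real Filter Set

lemma Fk_cont (κ : ℝ) : Continuous fun u : ℝ => Real.sqrt (1 + 2*κ*u^2) := by
  continuity

lemma Fk_lower (κ : ℝ) (hκ : 0 < κ) {s : ℝ} (hs : 0 ≤ s) : s ≤ Fk κ s := by
  have h := intervalIntegral.integral_mono_on hs
    (intervalIntegrable_const (c := (1:ℝ)) (μ := MeasureTheory.volume))
    ((Fk_cont κ).intervalIntegrable 0 s)
    (fun u hu => Real.one_le_sqrt.mpr (by nlinarith [sq_nonneg u, hκ.le]))
  simpa [Fk] using h

lemma Fk_upper (κ : ℝ) (hκ : 0 < κ) {s : ℝ} (hs : 0 ≤ s) :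
    Fk κ s ≤ s * Real.sqrt (1 + 2*κ*s^2) := by
  have h := intervalIntegral.integral_mono_on hs
    ((Fk_cont κ).intervalIntegrable 0 s)
    (intervalIntegrable_const (c := Real.sqrt (1 + 2*κ*s^2)) (μ := MeasureTheory.volume))
    (fun u hu => Real.sqrt_le_sqrt (by nlinarith [mul_le_mul hu.2 hu.2 hu.1 hs, hκ.le]))
  simpa [Fk, smul_eq_mul] using h

theorem stmt_9 (κ : ℝ) (hκ : 0 < κ) (f : ℝ → ℝ) (hf : IsInvF κ f) :
    Filter.Tendsto (fun t => f t * fd κ f t / t) (nhdsWithin 0 (Set.Ioi 0)) (nhds 1) ∧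
    Filter.Tendsto (fun t => f t * fd κ f t / t) Filter.atTop (nhds 0) := by
  obtain ⟨hf1, hf2⟩ := hf
  -- basic bounds on f
  have hfle : ∀ t : ℝ, 0 ≤ t → f t ≤ t := fun t ht => by
    have h := (hf2 t ht).2
    have := Fk_lower κ hκ (hf2 t ht).1
    linarith [this, h.le, h.ge]
  have hDpos : ∀ t : ℝ, 0 < Real.sqrt (1 + 2*κ*t^2) := fun t =>
    Real.sqrt_pos.mpr (by nlinarith [sq_nonneg t, hκ.le])
  have hApos : ∀ t : ℝ, 0 < Real.sqrt (1 + 2*κ*(f t)^2) := fun t =>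
    Real.sqrt_pos.mpr (by nlinarith [sq_nonneg (f t), hκ.le])
  have hAleD : ∀ t : ℝ, 0 ≤ t →
      Real.sqrt (1 + 2*κ*(f t)^2) ≤ Real.sqrt (1 + 2*κ*t^2) := fun t ht => by
    apply Real.sqrt_le_sqrt
    have h1 := hfle t ht
    have h0 := (hf2 t ht).1
    nlinarith [mul_le_mul h1 h1 h0 ht, hκ.le]
  have hfge : ∀ t : ℝ, 0 ≤ t → t ≤ f t * Real.sqrt (1 + 2*κ*t^2) := fun t ht => by
    have h0 := (hf2 t ht).1
    have h := (hf2 t ht).2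
    have hup := Fk_upper κ hκ h0
    rw [h] at hup
    calc t ≤ f t * Real.sqrt (1 + 2*κ*(f t)^2) := hup
      _ ≤ f t * Real.sqrt (1 + 2*κ*t^2) := by
          exact mul_le_mul_of_nonneg_left (hAleD t ht) h0
  constructor
  · -- limit at 0⁺ : squeeze between 1/(1+2κt²) and 1
    have hlow : Tendsto (fun t : ℝ => 1 / (1 + 2*κ*t^2)) (nhdsWithin 0 (Ioi 0)) (nhds 1) := by
      have hden : Tendsto (fun t : ℝ => 1 + 2*κ*t^2) (nhds 0) (nhds 1) := by
        have hc : Continuous fun t : ℝ => 1 + 2*κ*t^2 := by continuity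
        simpa using hc.tendsto 0
      have : Tendsto (fun t : ℝ => 1 / (1 + 2*κ*t^2)) (nhds 0) (nhds 1) := by
        have := (tendsto_const_nhds (x := (1:ℝ))).div hden one_ne_zero
        simpa [Pi.div_def] using this
      exact this.mono_left nhdsWithin_le_nhds
    refine tendsto_of_tendsto_of_tendsto_of_le_of_le' hlow tendsto_const_nhds ?_ ?_
    · filter_upwards [self_mem_nhdsWithin] with t (ht : 0 < t)
      set A := Real.sqrt (1 + 2*κ*(f t)^2) with hA
      set D := Real.sqrt (1 + 2*κ*t^2) with hD
      have hD2 : D^2 = 1 + 2*κ*t^2 := Real.sq_sqrt (by nlinarith [sq_nonneg t, hκ.le])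
      have h0 := (hf2 t ht.le).1
      have key : A * t ≤ D^2 * f t := by
        calc A * t ≤ D * t := mul_le_mul_of_nonneg_right (hAleD t ht.le) ht.le
          _ ≤ D * (f t * D) := mul_le_mul_of_nonneg_left (hfge t ht.le) (hDpos t).le
          _ = D^2 * f t := by ring
      have heq : f t * fd κ f t / t = f t / (A * t) := by
        rw [fd, ← hA]
        field_simp
      rw [← hD2, heq, div_le_div_iff₀ (by positivity) (by positivity)]
      nlinarith [key]
    · filter_upwards [self_mem_nhdsWithin] with t (ht : 0 < t)
      rw [div_le_one ht]
      have : fd κ f t ≤ 1 := by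
        rw [fd, div_le_one (hApos t)]
        exact Real.one_le_sqrt.mpr (by nlinarith [sq_nonneg (f t), hκ.le])
      calc f t * fd κ f t ≤ f t * 1 :=
            mul_le_mul_of_nonneg_left this (hf2 t ht.le).1
        _ = f t := mul_one _
        _ ≤ t := hfle t ht.le
  · -- limit at ∞ : squeeze between 0 and (1/√(2κ))/t
    have hbound : ∀ t : ℝ, 0 ≤ t → f t * fd κ f t ≤ 1 / Real.sqrt (2*κ) := fun t ht => by
      have h0 := (hf2 t ht).1
      have hs2κ : (0:ℝ) < Real.sqrt (2*κ) := Real.sqrt_pos.mpr (by linarith)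
      have key : f t * Real.sqrt (2*κ) ≤ Real.sqrt (1 + 2*κ*(f t)^2) := by
        rw [show f t * Real.sqrt (2*κ) = Real.sqrt (2*κ*(f t)^2) by
          rw [show 2*κ*(f t)^2 = (f t)^2 * (2*κ) by ring, Real.sqrt_mul (sq_nonneg _),
            Real.sqrt_sq h0]]
        exact Real.sqrt_le_sqrt (by linarith)
      rw [fd, mul_one_div, div_le_div_iff₀ (hApos t) hs2κ]
      linarith [key]
    have hconst : Tendsto (fun t : ℝ => 1 / Real.sqrt (2*κ) / t) atTop (nhds 0) :=
      Tendsto.div_atTop tendsto_const_nhds tendsto_id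
    refine tendsto_of_tendsto_of_tendsto_of_le_of_le' tendsto_const_nhds hconst ?_ ?_
    · filter_upwards [eventually_gt_atTop 0] with t ht
      have h0 := (hf2 t ht.le).1
      have : 0 ≤ fd κ f t := by rw [fd]; positivity
      positivity
    · filter_upwards [eventually_gt_atTop 0] with t ht
      exact div_le_div_of_nonneg_right (hbound t ht.le) ht.le
end

section
/- For each κ > 0 and each real p ≥ 3, the map t ↦ f_κ(t)^p f_κ'(t)/t is strictly increasing on (0,∞) and tends to 0 as t → 0⁺, where f_κ'(t) = (1 + 2κ f_κ(t)²)^{-1/2}. -/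
open Real Filter Set

lemma contA (κ : ℝ) : Continuous (fun s : ℝ => Real.sqrt (1 + 2*κ*s^2)) := by
  fun_prop

/-- `Fk κ b - Fk κ a ≥ b - a` for `a ≤ b`. -/
lemma Fk_sub_ge (κ : ℝ) (hκ : 0 ≤ κ) {a b : ℝ} (hab : a ≤ b) : a + (b - a) ≤ a + (Fk κ b - Fk κ a) := by
  have hint : ∀ c d : ℝ, IntervalIntegrable (fun s : ℝ => Real.sqrt (1 + 2*κ*s^2))
      MeasureTheory.volume c d := fun c d => (contA κ).intervalIntegrable c d
  have h1 : Fk κ b - Fk κ a = ∫ s in a..b, Real.sqrt (1 + 2*κ*s^2) := by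
    unfold Fk
    rw [← intervalIntegral.integral_interval_sub_left (hint 0 b) (hint 0 a)]
  have h2 : (b - a : ℝ) = ∫ _s in a..b, (1:ℝ) := by
    rw [intervalIntegral.integral_const]; simp
  rw [h1, h2]
  gcongr
  apply intervalIntegral.integral_mono_on hab
    (intervalIntegrable_const) (hint a b)
  intro x _
  rw [Real.one_le_sqrt]
  nlinarith [sq_nonneg x]

lemma Fk_ge (κ : ℝ) (hκ : 0 ≤ κ) {s : ℝ} (hs : 0 ≤ s) : s ≤ Fk κ s := by
  have := Fk_sub_ge κ hκ hs
  have h0 : Fk κ 0 = 0 := by unfold Fk; simp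
  rw [h0] at this; linarith

/-- Substitution: for `s > 0`, `Fk κ s = s^2 * ∫ v in 0..1, √(1/s^2 + 2κ v^2)`. -/
lemma Fk_eq (κ : ℝ) (hκ : 0 ≤ κ) {s : ℝ} (hs : 0 < s) :
    Fk κ s = s^2 * ∫ v in (0:ℝ)..1, Real.sqrt (1/s^2 + 2*κ*v^2) := by
  have h1 : ∫ v in (0:ℝ)..1, Real.sqrt (1 + 2*κ*(s*v)^2)
      = s⁻¹ • ∫ u in (0:ℝ)..s, Real.sqrt (1 + 2*κ*u^2) := by
    have := intervalIntegral.integral_comp_mul_left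
      (a := 0) (b := 1) (fun u : ℝ => Real.sqrt (1 + 2*κ*u^2)) (ne_of_gt hs)
    simpa using this
  have h2 : ∀ v : ℝ, Real.sqrt (1 + 2*κ*(s*v)^2) = s * Real.sqrt (1/s^2 + 2*κ*v^2) := by
    intro v
    rw [← Real.sqrt_sq hs.le, ← Real.sqrt_mul (sq_nonneg s)]
    congr 1
    field_simp
    rw [Real.sq_sqrt (sq_nonneg s)]
  have h3 : ∫ v in (0:ℝ)..1, Real.sqrt (1 + 2*κ*(s*v)^2)
      = s * ∫ v in (0:ℝ)..1, Real.sqrt (1/s^2 + 2*κ*v^2) := by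
    simp_rw [h2]
    rw [intervalIntegral.integral_const_mul]
  unfold Fk
  rw [h3, smul_eq_mul] at h1
  rw [show s^2 * (∫ v in (0:ℝ)..1, Real.sqrt (1/s^2 + 2*κ*v^2)) = s * (s * ∫ v in (0:ℝ)..1, Real.sqrt (1/s^2 + 2*κ*v^2)) by ring, h1]
  field_simp

theorem stmt_10 (κ : ℝ) (hκ : 0 < κ) (p : ℝ) (hp : 3 ≤ p)
    (f : ℝ → ℝ) (hf : IsInvF κ f) :
    StrictMonoOn (fun t => (f t) ^ p * fd κ f t / t) (Set.Ioi 0) ∧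
    Filter.Tendsto (fun t => (f t) ^ p * fd κ f t / t)
      (nhdsWithin 0 (Set.Ioi 0)) (nhds 0) := by
  obtain ⟨hf1, hf2⟩ := hf
  -- notation
  set G : ℝ → ℝ := fun s => ∫ v in (0:ℝ)..1, Real.sqrt (1/s^2 + 2*κ*v^2) with hG
  set B : ℝ → ℝ := fun s => Real.sqrt (1/s^2 + 2*κ) with hB
  have hGint : ∀ s : ℝ, IntervalIntegrable (fun v => Real.sqrt (1/s^2 + 2*κ*v^2))
      MeasureTheory.volume 0 1 := by
    intro s
    apply Continuous.intervalIntegrable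
    fun_prop
  have hBpos : ∀ s : ℝ, 0 < s → 0 < B s := by
    intro s hs
    apply Real.sqrt_pos.2
    positivity
  have hGpos : ∀ s : ℝ, 0 < s → 0 < G s := by
    intro s hs
    have h1 : (1:ℝ)/s ≤ G s := by
      have : (1:ℝ)/s = ∫ _v in (0:ℝ)..1, (1/s : ℝ) := by
        rw [intervalIntegral.integral_const]; simp
      rw [this]
      apply intervalIntegral.integral_mono_on zero_le_one intervalIntegrable_const (hGint s)
      intro x _
      rw [show (1:ℝ)/s = Real.sqrt (1/s^2) by rw [show (1:ℝ)/s^2 = (1/s)^2 by ring, Real.sqrt_sq (by positivity)]]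
      apply Real.sqrt_le_sqrt
      nlinarith [sq_nonneg x]
    have : (0:ℝ) < 1/s := by positivity
    linarith
  -- value of the function at t in terms of s = f t
  have key : ∀ t : ℝ, 0 < t → (f t) ^ p * fd κ f t / t = (f t) ^ (p - 3) / (B (f t) * G (f t)) := by
    intro t ht
    obtain ⟨hft, hFt⟩ := hf2 t ht.le
    set s := f t with hs
    have hspos : 0 < s := by
      rcases lt_or_eq_of_le hft with h | h
      · exact h
      · exfalso
        have : Fk κ s = 0 := by rw [← h]; unfold Fk; simp [← h]
        rw [hFt] at this; linarith
    have hA : Real.sqrt (1 + 2*κ*s^2) = s * B s := by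
      rw [hB, ← Real.sqrt_sq hspos.le, ← Real.sqrt_mul (sq_nonneg s)]
      congr 1
      field_simp
      exact Real.sq_sqrt (sq_nonneg s)
    have hFk : Fk κ s = s^2 * G s := Fk_eq κ hκ.le hspos
    rw [fd, ← hs, hA, ← hFt, hFk]
    have hBp := hBpos s hspos
    have hGp := hGpos s hspos
    have hrp : s ^ p = s ^ (p-3) * s^(3:ℕ) := by
      rw [← Real.rpow_natCast s 3, ← Real.rpow_add hspos]
      norm_num
    rw [hrp]
    field_simp
  constructor
  · -- strict monotonicity
    intro t₁ ht₁ t₂ ht₂ h12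
    simp only [mem_Ioi] at ht₁ ht₂
    obtain ⟨hft₁, hFt₁⟩ := hf2 t₁ ht₁.le
    obtain ⟨hft₂, hFt₂⟩ := hf2 t₂ ht₂.le
    have hs2pos : 0 < f t₂ := by
      rcases lt_or_eq_of_le hft₂ with h | h
      · exact h
      · exfalso
        have : Fk κ (f t₂) = 0 := by rw [← h]; unfold Fk; simp [← h]
        rw [hFt₂] at this; linarith
    have hs12 : f t₁ < f t₂ := by
      by_contra hcon
      push_neg at hcon
      have := Fk_sub_ge κ hκ.le hcon
      rw [hFt₁, hFt₂] at this
      linarith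
    have hs1pos : 0 < f t₁ := by
      rcases lt_or_eq_of_le hft₁ with h | h
      · exact h
      · exfalso
        have : Fk κ (f t₁) = 0 := by rw [← h]; unfold Fk; simp [← h]
        rw [hFt₁] at this; linarith
    show f t₁ ^ p * fd κ f t₁ / t₁ < f t₂ ^ p * fd κ f t₂ / t₂
    rw [key t₁ ht₁, key t₂ ht₂]
    have hB1 := hBpos _ hs1pos
    have hB2 := hBpos _ hs2pos
    have hG1 := hGpos _ hs1pos
    have hG2 := hGpos _ hs2pos
    have hBlt : B (f t₂) < B (f t₁) := by
      apply Real.sqrt_lt_sqrt (by positivity)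
      have : 1/(f t₂)^2 < 1/(f t₁)^2 := by
        apply div_lt_div_of_pos_left one_pos (by positivity)
        exact pow_lt_pow_left₀ hs12 hs1pos.le (by norm_num)
      linarith
    have hGle : G (f t₂) ≤ G (f t₁) := by
      apply intervalIntegral.integral_mono_on zero_le_one (hGint _) (hGint _)
      intro x _
      apply Real.sqrt_le_sqrt
      have : 1/(f t₂)^2 ≤ 1/(f t₁)^2 := by
        apply div_le_div_of_nonneg_left zero_le_one (by positivity)
        exact pow_le_pow_left₀ hs1pos.le hs12.le 2
      linarith
    have hc : 0 < B (f t₂) * G (f t₂) := by positivity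
    have hc' : B (f t₂) * G (f t₂) < B (f t₁) * G (f t₁) := by
      calc B (f t₂) * G (f t₂) ≤ B (f t₂) * G (f t₁) := by nlinarith
        _ < B (f t₁) * G (f t₁) := by nlinarith
    have hx : f t₁ ^ (p-3) ≤ f t₂ ^ (p-3) :=
      Real.rpow_le_rpow hs1pos.le hs12.le (by linarith)
    have hx2 : 0 < f t₂ ^ (p-3) := Real.rpow_pos_of_pos hs2pos _
    calc f t₁ ^ (p-3) / (B (f t₁) * G (f t₁))
        ≤ f t₂ ^ (p-3) / (B (f t₁) * G (f t₁)) := by gcongr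
      _ < f t₂ ^ (p-3) / (B (f t₂) * G (f t₂)) :=
          div_lt_div_of_pos_left hx2 hc hc'
  · -- limit
    have hub : ∀ t ∈ Ioi (0:ℝ), (f t) ^ p * fd κ f t / t ≤ t ^ (p-1) := by
      intro t ht
      simp only [mem_Ioi] at ht
      obtain ⟨hft, hFt⟩ := hf2 t ht.le
      have hfle : f t ≤ t := by
        have := Fk_ge κ hκ.le hft
        rw [hFt] at this; exact this
      have h1 : (f t) ^ p ≤ t ^ p := Real.rpow_le_rpow hft hfle (by linarith)
      have h2 : fd κ f t ≤ 1 := by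
        rw [fd]
        apply div_le_one_of_le₀ _ (Real.sqrt_nonneg _)
        rw [Real.one_le_sqrt]
        nlinarith [sq_nonneg (f t)]
      have h3 : 0 ≤ fd κ f t := by
        rw [fd]; positivity
      have h4 : (f t)^p * fd κ f t ≤ t^p := by
        calc (f t)^p * fd κ f t ≤ (f t)^p * 1 := by
              apply mul_le_mul_of_nonneg_left h2 (Real.rpow_nonneg hft p)
          _ = (f t)^p := by ring
          _ ≤ t^p := h1
      rw [show t ^ (p-1) = t^p / t by rw [Real.rpow_sub ht, Real.rpow_one]]
      gcongr
    have hlb : ∀ t ∈ Ioi (0:ℝ), (0:ℝ) ≤ (f t) ^ p * fd κ f t / t := by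
      intro t ht
      simp only [mem_Ioi] at ht
      obtain ⟨hft, _⟩ := hf2 t ht.le
      have h3 : 0 ≤ fd κ f t := by rw [fd]; positivity
      have := Real.rpow_nonneg hft p
      positivity
    have htend : Tendsto (fun t : ℝ => t ^ (p-1)) (nhdsWithin 0 (Ioi 0)) (nhds 0) := by
      have hc := (Real.continuousAt_rpow_const 0 (p-1) (Or.inr (by linarith))).tendsto
      rw [Real.zero_rpow (by linarith : p - 1 ≠ 0)] at hc
      exact hc.mono_left nhdsWithin_le_nhds
    exact tendsto_of_tendsto_of_tendsto_of_le_of_le' tendsto_const_nhds htend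
      (eventually_nhdsWithin_of_forall hlb) (eventually_nhdsWithin_of_forall hub)
end

section
/- Let p > 1 and g(t) = f₁(t)^{p+1}/t. Then g(t) ≥ g(1) · t^{(p-1)/2} for all t ≥ 1. -/
open Real Filter Set

lemma contF1 : Continuous (fun s : ℝ => Real.sqrt (1 + 2*1*s^2)) := by fun_prop

lemma Fk_sub (x y : ℝ) :
    Fk 1 y - Fk 1 x = ∫ s in x..y, Real.sqrt (1 + 2*1*s^2) := by
  have h := intervalIntegral.integral_add_adjacent_intervals
    (a := (0:ℝ)) (b := x) (c := y) (f := fun s => Real.sqrt (1 + 2*1*s^2))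
    (μ := MeasureTheory.volume)
    (contF1.intervalIntegrable _ _) (contF1.intervalIntegrable _ _)
  simp only [Fk]
  linarith

lemma Fk_gap {x y : ℝ} (h : x ≤ y) : y - x ≤ Fk 1 y - Fk 1 x := by
  rw [Fk_sub]
  have h1 : y - x = ∫ _ in x..y, (1:ℝ) := by simp
  rw [h1]
  apply intervalIntegral.integral_mono_on h
    (continuous_const.intervalIntegrable _ _) (contF1.intervalIntegrable _ _)
  intro u _
  rw [Real.one_le_sqrt]
  nlinarith [sq_nonneg u]

lemma Fk_strictMono_s15 {x y : ℝ} (h : x < y) : Fk 1 x < Fk 1 y := by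
  have := Fk_gap h.le; linarith

lemma sqrt2_le_32 : Real.sqrt 2 ≤ 3/2 := by
  nlinarith [Real.sq_sqrt (by norm_num : (0:ℝ) ≤ 2), Real.sqrt_nonneg 2]

lemma arith_key (s x t L : ℝ) (hs0 : 0 ≤ s) (hsle : s ≤ 3/2) (ht : 1 ≤ t)
    (hx : x ≤ t - 1) (hx0 : 0 ≤ x) (hL : L ≤ t - 1) (hL0 : 0 ≤ L) :
    s * (x/2) + s/4 * (L/2) ≤ t - 1 := by nlinarith

set_option maxHeartbeats 1000000 in
theorem stmt_15 (p : ℝ) (hp : 1 < p) (f₁ : ℝ → ℝ) (hf₁ : IsInvF 1 f₁) :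
    ∀ t, 1 ≤ t →
      ((f₁ 1) ^ (p + 1) / 1) * t ^ ((p - 1) / 2) ≤ (f₁ t) ^ (p + 1) / t := by
  obtain ⟨hinv1, hinv2⟩ := hf₁
  intro t ht
  have ht0 : (0:ℝ) < t := lt_of_lt_of_le one_pos ht
  set a := f₁ 1 with ha_def
  have ha0 : 0 ≤ a := (hinv2 1 one_pos.le).1
  have haF : Fk 1 a = 1 := (hinv2 1 one_pos.le).2
  have hFk0 : Fk 1 0 = 0 := by simp [Fk]
  have hapos : 0 < a := by
    rcases ha0.lt_or_eq with h | h
    · exact h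
    · exfalso; rw [← h, hFk0] at haF; norm_num at haF
  have ha1 : a ≤ 1 := by
    have := Fk_gap ha0
    rw [haF, hFk0] at this; linarith
  have hst1 : (1:ℝ) ≤ Real.sqrt t := Real.one_le_sqrt.mpr ht
  set b := a * Real.sqrt t with hb_def
  have hab : a ≤ b := le_mul_of_one_le_right ha0 hst1
  have hb0 : 0 < b := lt_of_lt_of_le hapos hab
  have s2sq : Real.sqrt 2 ^ 2 = 2 := Real.sq_sqrt (by norm_num)
  have s2pos : (1:ℝ) ≤ Real.sqrt 2 := Real.one_le_sqrt.mpr (by norm_num)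
  -- key : Fk 1 b ≤ t
  have hinv_int : IntervalIntegrable (fun s : ℝ => s⁻¹) MeasureTheory.volume a b := by
    apply intervalIntegral.intervalIntegrable_inv
    · intro x hx
      rw [Set.uIcc_of_le hab] at hx
      exact (lt_of_lt_of_le hapos hx.1).ne'
    · exact continuousOn_id
  have hg_int : IntervalIntegrable
      (fun s : ℝ => Real.sqrt 2 * s + (2*Real.sqrt 2)⁻¹ * s⁻¹) MeasureTheory.volume a b := by
    exact ((continuous_const.mul continuous_id).intervalIntegrable a b).add
      (hinv_int.const_mul _)
  have hptwise : ∀ u ∈ Set.Icc a b,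
      Real.sqrt (1 + 2*1*u^2) ≤ Real.sqrt 2 * u + (2*Real.sqrt 2)⁻¹ * u⁻¹ := by
    intro u hu
    have hu0 : 0 < u := lt_of_lt_of_le hapos hu.1
    have hrhs0 : 0 ≤ Real.sqrt 2 * u + (2*Real.sqrt 2)⁻¹ * u⁻¹ := by positivity
    have hsq : 1 + 2*1*u^2 ≤ (Real.sqrt 2 * u + (2*Real.sqrt 2)⁻¹ * u⁻¹)^2 := by
      have h2 : (0:ℝ) < Real.sqrt 2 := by linarith
      have hxy : Real.sqrt 2 * u * ((2*Real.sqrt 2)⁻¹ * u⁻¹) = 1/2 := by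
        field_simp
      nlinarith [sq_nonneg ((2*Real.sqrt 2)⁻¹ * u⁻¹), hxy, sq_nonneg u]
    calc Real.sqrt (1 + 2*1*u^2)
        ≤ Real.sqrt ((Real.sqrt 2 * u + (2*Real.sqrt 2)⁻¹ * u⁻¹)^2) := Real.sqrt_le_sqrt hsq
      _ = _ := Real.sqrt_sq hrhs0
  have hint_le : ∫ s in a..b, Real.sqrt (1 + 2*1*s^2)
      ≤ Real.sqrt 2 * ((b^2 - a^2)/2) + (2*Real.sqrt 2)⁻¹ * Real.log (b/a) := by
    have h1 := intervalIntegral.integral_mono_on hab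
      (contF1.intervalIntegrable _ _) hg_int hptwise
    have h2 : ∫ s in a..b, (Real.sqrt 2 * s + (2*Real.sqrt 2)⁻¹ * s⁻¹)
        = Real.sqrt 2 * ((b^2 - a^2)/2) + (2*Real.sqrt 2)⁻¹ * Real.log (b/a) := by
      have hadd := intervalIntegral.integral_add (μ := MeasureTheory.volume)
        (f := fun s : ℝ => Real.sqrt 2 * s) (g := fun s : ℝ => (2*Real.sqrt 2)⁻¹ * s⁻¹)
        ((continuous_const.mul continuous_id').intervalIntegrable a b)
        (hinv_int.const_mul _)
      rw [hadd, intervalIntegral.integral_const_mul, intervalIntegral.integral_const_mul,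
        integral_id, integral_inv]
      intro hx
      rw [Set.uIcc_of_le hab] at hx
      exact absurd hx.1 (not_le.mpr hapos)
    linarith
  have hb2 : b^2 = a^2 * t := by
    rw [hb_def, mul_pow, Real.sq_sqrt ht0.le]
  have hba : b / a = Real.sqrt t := by
    rw [hb_def, mul_comm, mul_div_assoc, div_self hapos.ne', mul_one]
  have key : Fk 1 b ≤ t := by
    have hsub := Fk_sub a b
    rw [haF] at hsub
    have hlog : Real.log (b/a) = Real.log t / 2 := by rw [hba, Real.log_sqrt ht0.le]
    have hlogt : Real.log t ≤ t - 1 := Real.log_le_sub_one_of_pos ht0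
    have hlogt0 : 0 ≤ Real.log t := Real.log_nonneg ht
    rw [hlog] at hint_le
    -- Fk 1 b = 1 + ∫ ≤ 1 + √2 a²(t-1)/2 + log t /(4√2) ≤ t
    have ha2 : a^2 ≤ 1 := by nlinarith
    have hfin : Real.sqrt 2 * ((b^2 - a^2)/2) + (2*Real.sqrt 2)⁻¹ * (Real.log t / 2)
        ≤ t - 1 := by
      have h22 : Real.sqrt 2 * Real.sqrt 2 = 2 := Real.mul_self_sqrt (by norm_num)
      have hinv2s : (2*Real.sqrt 2)⁻¹ = Real.sqrt 2 / 4 := by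
        refine inv_eq_of_mul_eq_one_right ?_
        field_simp
        linarith [h22]
      rw [hb2, hinv2s]
      have e1 : a^2*t - a^2 ≤ t - 1 := by
        nlinarith [mul_nonneg (sub_nonneg.mpr ha2) (sub_nonneg.mpr ht)]
      have e0 : 0 ≤ a^2*t - a^2 := by
        nlinarith [mul_nonneg (sq_nonneg a) (sub_nonneg.mpr ht)]
      exact arith_key _ _ _ _ (Real.sqrt_nonneg 2) sqrt2_le_32 ht e1 e0 hlogt hlogt0
    have h9 : Fk 1 b - 1 ≤ t - 1 := by rw [hsub]; exact hint_le.trans hfin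
    linarith [h9]
  -- hence b ≤ f₁ t
  have hbf : b ≤ f₁ t := by
    by_contra h
    push_neg at h
    have := Fk_strictMono_s15 h
    rw [(hinv2 t (by linarith)).2] at this
    linarith
  -- final rpow computation
  have hp1 : (0:ℝ) ≤ p + 1 := by linarith
  have hbpow : b ^ (p+1) ≤ (f₁ t) ^ (p+1) := Real.rpow_le_rpow hb0.le hbf hp1
  have hbeq : b ^ (p+1) = a ^ (p+1) * t ^ ((p+1)/2) := by
    rw [show (p+1)/2 = 1/2*(p+1) by ring, Real.rpow_mul ht0.le, ← Real.sqrt_eq_rpow,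
      hb_def, Real.mul_rpow ha0 (Real.sqrt_nonneg t)]
  have ht_pow : t ^ ((p-1)/2) = t ^ ((p+1)/2) / t := by
    rw [show (p-1)/2 = (p+1)/2 - 1 by ring, Real.rpow_sub ht0, Real.rpow_one]
  rw [div_one, ht_pow]
  calc a^(p+1) * (t^((p+1)/2)/t) = b^(p+1)/t := by rw [hbeq]; ring
    _ ≤ (f₁ t)^(p+1)/t := by gcongr
end

section
/- Let p > 3 and g(t) = f₁(t)^{p+1}/t. Then the map t ↦ g(t)/t is strictly increasing on (0,∞). -/
open Real Filter Set

noncomputable def Fo (t : ℝ) : ℝ := ∫ s in (0:ℝ)..t, Real.sqrt (1 + 2*s^2)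

lemma Fk_one (t : ℝ) : Fk 1 t = Fo t := by
  simp [Fk, Fo]

lemma cont_integrand : Continuous fun s : ℝ => Real.sqrt (1 + 2*s^2) := by
  fun_prop

lemma sqrt_u_pos (x : ℝ) : 0 < Real.sqrt (1 + 2*x^2) :=
  Real.sqrt_pos.mpr (by positivity)

lemma hasDerivAt_Fo (x : ℝ) : HasDerivAt Fo (Real.sqrt (1 + 2*x^2)) x :=
  (cont_integrand.integral_hasStrictDerivAt 0 x).hasDerivAt

lemma Fo_zero : Fo 0 = 0 := intervalIntegral.integral_same

lemma Fo_strictMono : StrictMonoOn Fo (Set.Ici 0) := by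
  apply strictMonoOn_of_deriv_pos (convex_Ici 0)
    (fun x _ => (hasDerivAt_Fo x).continuousAt.continuousWithinAt)
  intro x _
  rw [(hasDerivAt_Fo x).deriv]
  exact sqrt_u_pos x

lemma Fo_pos {x : ℝ} (hx : 0 < x) : 0 < Fo x := by
  have := Fo_strictMono (Set.self_mem_Ici) (le_of_lt hx) hx
  rwa [Fo_zero] at this

lemma hasDerivAt_inner (x : ℝ) :
    HasDerivAt (fun s : ℝ => 1 + 2*s^2) (2*(2*x^1)) x := by
  simpa using ((hasDerivAt_pow 2 x).const_mul 2).const_add (1:ℝ)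

lemma lemA {x : ℝ} (hx : 0 < x) : x * Real.sqrt (1 + 2*x^2) < 2 * Fo x := by
  set G : ℝ → ℝ := fun s => 2 * Fo s - s * Real.sqrt (1 + 2*s^2) with hG
  have hd : ∀ y : ℝ, HasDerivAt G
      (2 * Real.sqrt (1 + 2*y^2) -
        (1 * Real.sqrt (1 + 2*y^2) + y * (2*(2*y^1) / (2 * Real.sqrt (1 + 2*y^2))))) y := by
    intro y
    have h1 : HasDerivAt (fun s : ℝ => Real.sqrt (1 + 2*s^2))
        (2*(2*y^1) / (2 * Real.sqrt (1 + 2*y^2))) y :=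
      (hasDerivAt_inner y).sqrt (by positivity)
    exact ((hasDerivAt_Fo y).const_mul 2).sub ((hasDerivAt_id y).mul h1)
  have hpos : ∀ y : ℝ, 0 < 2 * Real.sqrt (1 + 2*y^2) -
      (1 * Real.sqrt (1 + 2*y^2) + y * (2*(2*y^1) / (2 * Real.sqrt (1 + 2*y^2)))) := by
    intro y
    have hs := sqrt_u_pos y
    have hsq : Real.sqrt (1 + 2*y^2) * Real.sqrt (1 + 2*y^2) = 1 + 2*y^2 :=
      Real.mul_self_sqrt (by positivity)
    rw [show (2:ℝ) * Real.sqrt (1 + 2*y^2) -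
        (1 * Real.sqrt (1 + 2*y^2) + y * (2*(2*y^1) / (2 * Real.sqrt (1 + 2*y^2))))
        = 1 / Real.sqrt (1 + 2*y^2) by
        rw [eq_div_iff (ne_of_gt hs)]
        field_simp
        nlinarith [hsq, Real.sq_sqrt (show (0:ℝ) ≤ 1 + 2*y^2 by positivity)]]
    positivity
  have hmono : StrictMonoOn G (Set.Ici 0) := by
    apply strictMonoOn_of_deriv_pos (convex_Ici 0)
      (fun y _ => (hd y).continuousAt.continuousWithinAt)
    intro y _
    rw [(hd y).deriv]
    exact hpos y
  have h0 : G 0 = 0 := by simp [hG, Fo_zero]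
  have := hmono (Set.self_mem_Ici) (le_of_lt hx) hx
  rw [h0] at this
  simp only [hG] at this
  linarith

lemma lemB {p : ℝ} (hp : 3 < p) :
    StrictMonoOn (fun s : ℝ => s ^ (p+1) / (Fo s)^2) (Set.Ioi 0) := by
  have hd : ∀ x ∈ Set.Ioi (0:ℝ), HasDerivAt (fun s : ℝ => s ^ (p+1) / (Fo s)^2)
      (((p+1) * x ^ (p+1-1) * (Fo x)^2 -
        x ^ (p+1) * ((2:ℕ) * Fo x ^ 1 * Real.sqrt (1 + 2*x^2))) / ((Fo x)^2)^2) x := by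
    intro x hx
    have h1 : HasDerivAt (fun s : ℝ => s ^ (p+1)) ((p+1) * x ^ (p+1-1)) x :=
      Real.hasDerivAt_rpow_const (Or.inl (ne_of_gt hx))
    have h2 : HasDerivAt (fun s : ℝ => (Fo s)^2)
        ((2:ℕ) * Fo x ^ 1 * Real.sqrt (1 + 2*x^2)) x :=
      (hasDerivAt_Fo x).pow 2
    exact h1.div h2 (pow_ne_zero 2 (ne_of_gt (Fo_pos hx)))
  apply strictMonoOn_of_deriv_pos (convex_Ioi 0)
    (fun x hx => (hd x hx).continuousAt.continuousWithinAt)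
  intro x hx
  rw [interior_Ioi] at hx
  rw [(hd x hx).deriv]
  have hF := Fo_pos hx
  have hs := sqrt_u_pos x
  have hA : (0:ℝ) < x ^ (p+1-1) := Real.rpow_pos_of_pos hx _
  have hxp : x ^ (p+1) = x ^ (p+1-1) * x := by
    rw [show p+1 = (p+1-1)+1 by ring, Real.rpow_add hx, Real.rpow_one]
    ring_nf
  have hkey := lemA hx
  have hnum : 0 < (p+1) * x ^ (p+1-1) * (Fo x)^2 -
      x ^ (p+1) * ((2:ℕ) * Fo x ^ 1 * Real.sqrt (1 + 2*x^2)) := by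
    rw [hxp]
    have h5 : 2 * (x * Real.sqrt (1 + 2*x^2)) < (p+1) * Fo x := by nlinarith
    have h6 : 0 < x ^ (p+1-1) * (Fo x * ((p+1) * Fo x - 2 * (x * Real.sqrt (1 + 2*x^2)))) :=
      mul_pos hA (mul_pos hF (by linarith))
    push_cast
    nlinarith [h6]
  exact div_pos hnum (by positivity)

theorem stmt_17 (p : ℝ) (hp : 3 < p) (f₁ : ℝ → ℝ) (hf₁ : IsInvF 1 f₁) :
    StrictMonoOn (fun t => ((f₁ t) ^ (p + 1) / t) / t) (Set.Ioi 0) := by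
  intro t₁ ht₁ t₂ ht₂ hlt
  obtain ⟨hs₁nn, hF₁⟩ := hf₁.2 t₁ (le_of_lt ht₁)
  obtain ⟨hs₂nn, hF₂⟩ := hf₁.2 t₂ (le_of_lt ht₂)
  rw [Fk_one] at hF₁ hF₂
  have hs₁ : 0 < f₁ t₁ := by
    rcases lt_or_eq_of_le hs₁nn with h | h
    · exact h
    · exfalso; rw [← h, Fo_zero] at hF₁; exact absurd hF₁.symm (ne_of_gt ht₁)
  have hs₂ : 0 < f₁ t₂ := by
    rcases lt_or_eq_of_le hs₂nn with h | h
    · exact h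
    · exfalso; rw [← h, Fo_zero] at hF₂; exact absurd hF₂.symm (ne_of_gt (lt_trans ht₁ hlt))
  have hslt : f₁ t₁ < f₁ t₂ := by
    by_contra hcon
    push_neg at hcon
    have := Fo_strictMono.monotoneOn hs₂nn hs₁nn hcon
    rw [hF₁, hF₂] at this
    linarith
  have := lemB hp hs₁ hs₂ hslt
  simp only [hF₁, hF₂] at this
  simpa [div_div, sq] using this
end
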